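/- Suppose x̂ ∉ P and there exists i ∈ I with a_iᵀ x̂ > b_i. Then for such an i there exists i* ∈ I with a_{i*}ᵀ x̂ < b_{i*} such that, defining ỹ ∈ ℝ^m by ỹ_i = 1/(a_iᵀ x̂ − b_i), ỹ_{i*} = 1/(b_{i*} − a_{i*}ᵀ x̂), and ỹ_k = 0 for k ∉ {i, i*}, and setting c̃ = Aᵀ ỹ, one has c̃ ≠ 0 and the normalized triple (c̃/‖c̃‖', ỹ/‖c̃‖') together with ε = 1 is an optimal solution of GIO_R({x̂}); in particular, the optimal value of GIO_R({x̂}) is 0. -/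

import Mathlib

open Matrix

lemma aux_sum_two {m : ℕ} (i j : Fin m) (hij : i ≠ j) (a c : ℝ) (f : Fin m → ℝ) :
    (∑ k, f k * (if k = i then a else if k = j then c else 0)) = f i * a + f j * c := by
  have h : ∀ k ∈ Finset.univ, f k * (if k = i then a else if k = j then c else 0)
      = (if k = i then f i * a else 0) + (if k = j then f j * c else 0) := by
    intro k _
    by_cases h1 : k = i
    · subst h1; rw [if_pos rfl, if_pos rfl, if_neg hij]; ring
    · by_cases h2 : k = j
      · subst h2; rw [if_neg h1, if_neg h1, if_pos rfl, if_pos rfl]; ring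
      · rw [if_neg h1, if_neg h1, if_neg h2, if_neg h2]; ring
  rw [Finset.sum_congr rfl h, Finset.sum_add_distrib]
  simp

lemma aux_dot_self_pos {n : ℕ} (v : Fin n → ℝ) (hv : v ≠ 0) : 0 < v ⬝ᵥ v := by
  have h0 : v ⬝ᵥ v ≠ 0 := fun h => hv (dotProduct_self_eq_zero.1 h)
  have h1 : 0 ≤ v ⬝ᵥ v := Finset.sum_nonneg fun k _ => mul_self_nonneg _
  exact lt_of_le_of_ne h1 (Ne.symm h0)

lemma aux_interior_strict {m n : ℕ} (A : Matrix (Fin m) (Fin n) ℝ) (b : Fin m → ℝ)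
    (x₀ : Fin n → ℝ) (hx : x₀ ∈ interior {x : Fin n → ℝ | ∀ i, b i ≤ A.mulVec x i})
    (i : Fin m) (hAi : A i ≠ 0) : b i < A.mulVec x₀ i := by
  by_contra h
  push_neg at h
  rw [mem_interior_iff_mem_nhds, Metric.mem_nhds_iff] at hx
  obtain ⟨ε, hε, hball⟩ := hx
  set v := A i with hv
  have hs : 0 < v ⬝ᵥ v := aux_dot_self_pos v hAi
  set C : ℝ := 1 + ∑ j, |v j| with hC
  have hCpos : 0 < C := by
    have : 0 ≤ ∑ j, |v j| := Finset.sum_nonneg fun j _ => abs_nonneg _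
    linarith
  set t : ℝ := ε / (2 * C) with ht
  have htpos : 0 < t := by positivity
  set x₁ : Fin n → ℝ := x₀ - t • v with hx₁
  have hmem : x₁ ∈ Metric.ball x₀ ε := by
    have hle : dist x₁ x₀ ≤ ε / 2 := by
      rw [dist_pi_le_iff (by positivity)]
      intro j
      have h1 : |v j| ≤ ∑ k, |v k| :=
        Finset.single_le_sum (fun k _ => abs_nonneg (v k)) (Finset.mem_univ j)
      have : dist (x₁ j) (x₀ j) = t * |v j| := by
        rw [Real.dist_eq]
        simp only [hx₁, Pi.sub_apply, Pi.smul_apply, smul_eq_mul]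
        rw [show x₀ j - t * v j - x₀ j = -(t * v j) by ring, abs_neg, abs_mul,
          abs_of_pos htpos]
      rw [this]
      calc t * |v j| ≤ t * C := by nlinarith
        _ = ε / 2 := by field_simp [ht]; rw [ht]; field_simp
    calc dist x₁ x₀ ≤ ε / 2 := hle
      _ < ε := by linarith
  have hfeas := hball hmem i
  have hcomp : A.mulVec x₁ i = A.mulVec x₀ i - t * (v ⬝ᵥ v) := by
    simp only [Matrix.mulVec, hx₁]
    rw [dotProduct_sub, dotProduct_smul]
    simp [hv, smul_eq_mul]
  rw [hcomp] at hfeas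
  nlinarith

/-- Feasibility for the single-point relative duality gap inverse problem
`GIO_R({x̂})`, including the convention that `bᵀ y = 0` forces `ε = 1`. -/
def FeasR1 {m n : ℕ} (A : Matrix (Fin m) (Fin n) ℝ) (b : Fin m → ℝ)
    (N : (Fin n → ℝ) → ℝ) (xhat : Fin n → ℝ)
    (c : Fin n → ℝ) (y : Fin m → ℝ) (ε : ℝ) : Prop :=
  Aᵀ.mulVec y = c ∧ (∀ i, 0 ≤ y i) ∧ c ⬝ᵥ xhat = ε * (b ⬝ᵥ y) ∧ N c = 1 ∧
    (b ⬝ᵥ y = 0 → ε = 1)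

theorem stmt_10
    (m n : ℕ) (hm : 0 < m) (hn : 0 < n)
    (A : Matrix (Fin m) (Fin n) ℝ) (b : Fin m → ℝ) (hb : b ≠ 0)
    (hrows : ∀ i, A i ≠ 0)
    (hPint : (interior {x : Fin n → ℝ | ∀ i, b i ≤ A.mulVec x i}).Nonempty)
    -- the normalization norm ‖·‖'
    (N : (Fin n → ℝ) → ℝ)
    (hN₁ : ∀ x y, N (x + y) ≤ N x + N y)
    (hN₂ : ∀ (a : ℝ) (x : Fin n → ℝ), N (a • x) = |a| * N x)
    (hN₃ : ∀ x, x ≠ 0 → 0 < N x)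
    -- x̂ ∉ P and some constraint strictly satisfied
    (xhat : Fin n → ℝ) (hxnotP : ¬ ∀ i, b i ≤ A.mulVec xhat i)
    (i : Fin m) (hi : b i < A i ⬝ᵥ xhat) :
    ∃ istar : Fin m, A istar ⬝ᵥ xhat < b istar ∧
      ∀ ytil : Fin m → ℝ,
        ytil = (fun k => if k = i then 1 / (A i ⬝ᵥ xhat - b i)
                else if k = istar then 1 / (b istar - A istar ⬝ᵥ xhat) else 0) →
        ∀ ctil : Fin n → ℝ, ctil = Aᵀ.mulVec ytil →
          ctil ≠ 0 ∧
          -- (c̃/‖c̃‖', ỹ/‖c̃‖') together with ε = 1 is optimal for GIO_R({x̂})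
          FeasR1 A b N xhat ((N ctil)⁻¹ • ctil) ((N ctil)⁻¹ • ytil) 1 ∧
          (∀ c y ε, FeasR1 A b N xhat c y ε → |(1 : ℝ) - 1| ≤ |ε - 1|) ∧
          -- in particular the optimal value of GIO_R({x̂}) is 0
          sInf {v : ℝ | ∃ (c : Fin n → ℝ) (y : Fin m → ℝ) (ε : ℝ),
            FeasR1 A b N xhat c y ε ∧ v = |ε - 1|} = 0 := by
  push_neg at hxnotP
  obtain ⟨istar, histar⟩ := hxnotP
  have histar' : A istar ⬝ᵥ xhat < b istar := histar
  refine ⟨istar, histar', ?_⟩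
  intro ytil hy ctil hc
  have hα : 0 < A i ⬝ᵥ xhat - b i := sub_pos.mpr hi
  have hβ : 0 < b istar - A istar ⬝ᵥ xhat := sub_pos.mpr histar'
  set α := A i ⬝ᵥ xhat - b i with hαdef
  set β := b istar - A istar ⬝ᵥ xhat with hβdef
  have hne : i ≠ istar := by
    intro h; rw [h] at hi; exact absurd hi (not_lt.mpr histar'.le)
  -- generic dot product against ytil
  have hdot : ∀ f : Fin m → ℝ, (∑ k, f k * ytil k) = f i * (1/α) + f istar * (1/β) := by
    intro f
    rw [hy]
    exact aux_sum_two i istar hne (1/α) (1/β) f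
  have hynn : ∀ k, 0 ≤ ytil k := by
    intro k
    rw [hy]
    dsimp only
    by_cases h1 : k = i
    · rw [if_pos h1]; positivity
    · rw [if_neg h1]
      by_cases h2 : k = istar
      · rw [if_pos h2]; positivity
      · rw [if_neg h2]
  -- ctil ⬝ᵥ z = ∑ ytil k * (A.mulVec z) k for any z
  have hcdot : ∀ z : Fin n → ℝ,
      ctil ⬝ᵥ z = (A.mulVec z i) * (1/α) + (A.mulVec z istar) * (1/β) := by
    intro z
    rw [hc, Matrix.mulVec_transpose, ← Matrix.dotProduct_mulVec]
    rw [show ytil ⬝ᵥ A.mulVec z = ∑ k, A.mulVec z k * ytil k by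
      simp [dotProduct, mul_comm]]
    exact hdot (A.mulVec z)
  have hbdot : b ⬝ᵥ ytil = b i * (1/α) + b istar * (1/β) := hdot b
  have hmvi : A.mulVec xhat i = A i ⬝ᵥ xhat := rfl
  have hmvistar : A.mulVec xhat istar = A istar ⬝ᵥ xhat := rfl
  have key3 : ctil ⬝ᵥ xhat = b ⬝ᵥ ytil := by
    rw [hcdot xhat, hbdot, hmvi, hmvistar]
    field_simp
    ring
  -- ctil ≠ 0
  obtain ⟨x₀, hx₀⟩ := hPint
  have hx₀S : ∀ k, b k ≤ A.mulVec x₀ k := interior_subset hx₀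
  have hstrict : b i < A.mulVec x₀ i := aux_interior_strict A b x₀ hx₀ i (hrows i)
  have hcne : ctil ≠ 0 := by
    intro h0
    have h1 : ctil ⬝ᵥ x₀ = 0 := by rw [h0, zero_dotProduct]
    have h2 : b ⬝ᵥ ytil = 0 := by rw [← key3, h0, zero_dotProduct]
    rw [hcdot x₀] at h1
    rw [hbdot] at h2
    have t1 : 0 < (A.mulVec x₀ i - b i) * (1/α) :=
      mul_pos (sub_pos.mpr hstrict) (by positivity)
    have t2 : 0 ≤ (A.mulVec x₀ istar - b istar) * (1/β) :=
      mul_nonneg (sub_nonneg.mpr (hx₀S istar)) (by positivity)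
    nlinarith
  have hNc : 0 < N ctil := hN₃ ctil hcne
  set s : ℝ := (N ctil)⁻¹ with hs
  have hspos : 0 < s := inv_pos.mpr hNc
  refine ⟨hcne, ⟨?_, ?_, ?_, ?_, ?_⟩, ?_, ?_⟩
  · rw [Matrix.mulVec_smul, hc]
  · intro k
    simp only [Pi.smul_apply, smul_eq_mul]
    exact mul_nonneg hspos.le (hynn k)
  · rw [smul_dotProduct, dotProduct_smul, key3]; ring
  · rw [hN₂, abs_of_pos hspos, hs, inv_mul_cancel₀ hNc.ne']
  · intro _; rfl
  · intro c y ε _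
    simp only [sub_self, abs_zero]
    exact abs_nonneg _
  · have hfeas : FeasR1 A b N xhat (s • ctil) (s • ytil) 1 := by
      refine ⟨by rw [Matrix.mulVec_smul, hc], ?_, ?_, ?_, fun _ => rfl⟩
      · intro k
        simp only [Pi.smul_apply, smul_eq_mul]
        exact mul_nonneg hspos.le (hynn k)
      · rw [smul_dotProduct, dotProduct_smul, key3]; ring
      · rw [hN₂, abs_of_pos hspos, hs, inv_mul_cancel₀ hNc.ne']
    have hmem0 : (0:ℝ) ∈ {v : ℝ | ∃ (c : Fin n → ℝ) (y : Fin m → ℝ) (ε : ℝ),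
        FeasR1 A b N xhat c y ε ∧ v = |ε - 1|} :=
      ⟨s • ctil, s • ytil, 1, hfeas, by norm_num⟩
    have hlb : ∀ v ∈ {v : ℝ | ∃ (c : Fin n → ℝ) (y : Fin m → ℝ) (ε : ℝ),
        FeasR1 A b N xhat c y ε ∧ v = |ε - 1|}, (0:ℝ) ≤ v := by
      rintro v ⟨c, y, ε, _, rfl⟩
      exact abs_nonneg _
    exact le_antisymm (csInf_le ⟨0, hlb⟩ hmem0) (le_csInf ⟨0, hmem0⟩ hlb)
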